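/- Let α > 1 and c ∈ ℝ. If f belongs to the domain of the Hadamard-type fractional integral J^α_{0+,c} (i.e. ∫_0^x u^{c-1} (log(x/u))^{α-1} |f(u)| du < ∞ for a.e. x > 0), then f ∈ X_{c,loc}, i.e. x^{c-1} f(x) is integrable near 0. -/

import Mathlib

open MeasureTheory Set

/-- f ∈ Dom J^α_{0+,c}: ∫_0^x u^{c-1}(log(x/u))^{α-1}|f(u)| du < ∞ for a.e. x > 0 -/
def memDomJ (α c : ℝ) (f : ℝ → ℂ) : Prop :=
  ∀ᵐ x ∂(volume.restrict (Set.Ioi (0 : ℝ))),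
    (∫⁻ u in Set.Ioo (0 : ℝ) x,
      ENNReal.ofReal (u ^ (c - 1) * Real.log (x / u) ^ (α - 1) * ‖f u‖)) < ⊤

/-- f ∈ X_{c,loc} -/
def memXloc (c : ℝ) (f : ℝ → ℂ) : Prop :=
  ∀ a : ℝ, 0 < a →
    IntegrableOn (fun x : ℝ => x ^ (c - 1) * ‖f x‖) (Set.Ioo 0 a)

theorem stmt5 (α c : ℝ) (hα : 1 < α) (f : ℝ → ℂ) (hmeas : Measurable f)
    (hdom : memDomJ α c f) : memXloc c f := by
  intro a ha
  -- find a good x > a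
  have hsub : Set.Ioi a ⊆ Set.Ioi (0 : ℝ) := fun y hy => lt_trans ha hy
  have hdom' : ∀ᵐ x ∂(volume.restrict (Set.Ioi a)),
      (∫⁻ u in Set.Ioo (0 : ℝ) x,
        ENNReal.ofReal (u ^ (c - 1) * Real.log (x / u) ^ (α - 1) * ‖f u‖)) < ⊤ :=
    Filter.Eventually.filter_mono (ae_mono (Measure.restrict_mono hsub le_rfl)) hdom
  have hmem : ∀ᵐ x ∂(volume.restrict (Set.Ioi a)), x ∈ Set.Ioi a :=
    ae_restrict_mem measurableSet_Ioi
  have hne : (volume.restrict (Set.Ioi a)) ≠ 0 := by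
    rw [Ne, Measure.restrict_eq_zero, Real.volume_Ioi]
    exact ENNReal.top_ne_zero
  haveI : (ae (volume.restrict (Set.Ioi a))).NeBot := ae_neBot.mpr hne
  obtain ⟨x, hxfin, hxa⟩ := (hdom'.and hmem).exists
  have hax : a < x := hxa
  set m : ℝ := Real.log (x / a) ^ (α - 1) with hm
  have hxapos : 1 < x / a := (one_lt_div ha).mpr hax
  have hlogm : 0 < Real.log (x / a) := Real.log_pos hxapos
  have hmpos : 0 < m := Real.rpow_pos_of_pos hlogm _
  -- measurability
  have hsm : AEStronglyMeasurable (fun u : ℝ => u ^ (c - 1) * ‖f u‖)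
      (volume.restrict (Set.Ioo 0 a)) := by
    apply Measurable.aestronglyMeasurable
    have : (fun u => ‖f u‖) = fun u => ‖f u‖ := rfl
    exact (measurable_id.pow measurable_const).mul hmeas.norm
  refine ⟨hsm, ?_⟩
  rw [hasFiniteIntegral_iff_ofReal ?_]
  swap
  · filter_upwards [ae_restrict_mem measurableSet_Ioo] with u hu
    exact mul_nonneg (Real.rpow_nonneg hu.1.le _) (norm_nonneg _)
  -- pointwise bound on Ioo 0 a
  have hbound : ∀ u ∈ Set.Ioo (0 : ℝ) a,
      ENNReal.ofReal (u ^ (c - 1) * ‖f u‖) ≤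
        ENNReal.ofReal m⁻¹ *
          ENNReal.ofReal (u ^ (c - 1) * Real.log (x / u) ^ (α - 1) * ‖f u‖) := by
    intro u hu
    rw [← ENNReal.ofReal_mul (inv_nonneg.mpr hmpos.le)]
    apply ENNReal.ofReal_le_ofReal
    have hLm : m ≤ Real.log (x / u) ^ (α - 1) := by
      apply Real.rpow_le_rpow hlogm.le _ (by linarith)
      apply Real.log_le_log (by positivity)
      exact div_le_div_of_nonneg_left (lt_trans ha hax).le hu.1 hu.2.le
    have hup : (0:ℝ) ≤ u ^ (c - 1) := Real.rpow_nonneg hu.1.le _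
    have hfu : (0:ℝ) ≤ ‖f u‖ := norm_nonneg _
    rw [inv_mul_eq_div, le_div_iff₀ hmpos]
    nlinarith [mul_le_mul_of_nonneg_left hLm (mul_nonneg hup hfu)]
  calc ∫⁻ u in Set.Ioo (0:ℝ) a, ENNReal.ofReal (u ^ (c - 1) * ‖f u‖)
      ≤ ∫⁻ u in Set.Ioo (0:ℝ) a, ENNReal.ofReal m⁻¹ *
          ENNReal.ofReal (u ^ (c - 1) * Real.log (x / u) ^ (α - 1) * ‖f u‖) := by
        apply setLIntegral_mono' measurableSet_Ioo hbound
    _ = ENNReal.ofReal m⁻¹ * ∫⁻ u in Set.Ioo (0:ℝ) a,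
          ENNReal.ofReal (u ^ (c - 1) * Real.log (x / u) ^ (α - 1) * ‖f u‖) :=
        lintegral_const_mul' _ _ ENNReal.ofReal_ne_top
    _ ≤ ENNReal.ofReal m⁻¹ * ∫⁻ u in Set.Ioo (0:ℝ) x,
          ENNReal.ofReal (u ^ (c - 1) * Real.log (x / u) ^ (α - 1) * ‖f u‖) := by
        gcongr
    _ < ⊤ := ENNReal.mul_lt_top ENNReal.ofReal_lt_top hxfin
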